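/- For every proper nonzero monomial ideal I of a normal affine semigroup ring ℂ[S] and every 𝐝 with −𝐝 ∈ S, there exists a polynomial f divisible by H_𝐝 such that the operator δ = x^𝐝 f(θ) fixes I, i.e. δ(I) = I. Explicitly, if I = (x^{𝐚_1},…,x^{𝐚_m}), then f = Σ_i H_{𝐝 − 𝐚_i} works. -/
import Mathlib


/-- The polynomial `H_e` of the Saito-Travis description, as an integer-valued
function on the lattice: `H_e(a) = ∏_i (h_i(a), h_i(-e)-1)!`. -/
def Hfun (d m : ℕ) (h : Fin m → ((Fin d → ℤ) →ₗ[ℤ] ℤ)) (e : Fin d → ℤ)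
    (a : Fin d → ℤ) : ℤ :=
  ∏ i, ∏ k ∈ Finset.range (h i (-e)).toNat, (h i a - (k : ℤ))

private lemma prod_desc_pos (x N : ℤ) (hx : 0 ≤ x) (hN : N ≤ x) :
    0 < ∏ k ∈ Finset.range N.toNat, (x - (k : ℤ)) := by
  apply Finset.prod_pos
  intro k hk
  have hk' := Finset.mem_range.mp hk
  omega

private lemma prod_desc_zero (x N : ℤ) (hx : 0 ≤ x) (hN : x < N) :
    ∏ k ∈ Finset.range N.toNat, (x - (k : ℤ)) = 0 := by
  apply Finset.prod_eq_zero (i := x.toNat)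
  · exact Finset.mem_range.mpr (by omega)
  · omega

/-- for every proper nonzero monomial ideal I = (x^{a_1},...,x^{a_m})
and -d ∈ S, the function f = Σ_j H_{d - a_j} is divisible by H_d and the operator
x^d f(θ) fixes I, i.e. (using the characterization of δ(I) = I given -d ∈ S)
Exp I ∩ {f = 0} = Exp I \ (Exp I - d). -/
theorem exists_fixing_operator (d m : ℕ) (h : Fin m → ((Fin d → ℤ) →ₗ[ℤ] ℤ))
    (S : Set (Fin d → ℤ)) (hS : ∀ a, a ∈ S ↔ ∀ i, 0 ≤ h i a)
    (dv : Fin d → ℤ) (hdS : -dv ∈ S)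
    (mI : ℕ) (hmI : 0 < mI) (av : Fin mI → Fin d → ℤ) (hav : ∀ j, av j ∈ S)
    (E : Set (Fin d → ℤ)) (hE : E = ⋃ j, {x | ∃ s ∈ S, x = av j + s})
    (hproper : E ≠ S) :
    (∃ g : (Fin d → ℤ) → ℤ,
        ∀ a, (∑ j, Hfun d m h (dv - av j) a) = Hfun d m h dv a * g a) ∧
      E ∩ {a | (∑ j, Hfun d m h (dv - av j) a) = 0} = E \ {a | a + dv ∈ E} := by
  have hdv : ∀ i, 0 ≤ h i (-dv) := (hS _).mp hdS
  have havi : ∀ j i, 0 ≤ h i (av j) := fun j => (hS _).mp (hav j)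
  have hneg : ∀ j i, h i (-(dv - av j)) = h i (av j) + h i (-dv) := by
    intro j i
    have h1 : (-(dv - av j)) = av j + (-dv) := by ring
    rw [h1, map_add]
  -- per-term factorization
  have hT_eq : ∀ (j : Fin mI) (a : Fin d → ℤ),
      Hfun d m h (dv - av j) a =
        Hfun d m h dv a * ∏ i, ∏ k ∈ Finset.range (h i (av j)).toNat,
          (h i a - (((h i (-dv)).toNat + k : ℕ) : ℤ)) := by
    intro j a
    unfold Hfun
    rw [← Finset.prod_mul_distrib]
    refine Finset.prod_congr rfl fun i _ => ?_
    have h1 : (h i (-(dv - av j))).toNat = (h i (-dv)).toNat + (h i (av j)).toNat := by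
      have := hneg j i
      have := hdv i
      have := havi j i
      omega
    rw [h1, Finset.prod_range_add]
  -- membership in E
  have hmemE : ∀ x, x ∈ E ↔ ∃ j, ∀ i, h i (av j) ≤ h i x := by
    intro x
    subst hE
    simp only [Set.mem_iUnion, Set.mem_setOf_eq]
    constructor
    · rintro ⟨j, s, hs, rfl⟩
      refine ⟨j, fun i => ?_⟩
      rw [map_add]
      have := (hS s).mp hs i
      omega
    · rintro ⟨j, hj⟩
      refine ⟨j, x - av j, (hS _).mpr fun i => ?_, by ring⟩
      rw [map_sub]
      have := hj i
      omega
  constructor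
  · refine ⟨fun a => ∑ j, ∏ i, ∏ k ∈ Finset.range (h i (av j)).toNat,
        (h i a - (((h i (-dv)).toNat + k : ℕ) : ℤ)), fun a => ?_⟩
    rw [Finset.mul_sum]
    exact Finset.sum_congr rfl fun j _ => hT_eq j a
  · ext a
    simp only [Set.mem_inter_iff, Set.mem_setOf_eq, Set.mem_diff]
    refine and_congr_right fun haE => ?_
    -- a ∈ S, so all h i a ≥ 0
    have ha : ∀ i, 0 ≤ h i a := by
      obtain ⟨j, hj⟩ := (hmemE a).mp haE
      intro i
      have := havi j i
      have := hj i
      omega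
    -- sign analysis of each term
    have hTpos : ∀ j : Fin mI, (∀ i, h i (av j) + h i (-dv) ≤ h i a) →
        0 < Hfun d m h (dv - av j) a := by
      intro j hc
      unfold Hfun
      apply Finset.prod_pos
      intro i _
      refine prod_desc_pos _ _ (ha i) ?_
      rw [hneg j i]; exact hc i
    have hTzero : ∀ j : Fin mI, ¬ (∀ i, h i (av j) + h i (-dv) ≤ h i a) →
        Hfun d m h (dv - av j) a = 0 := by
      intro j hc
      push_neg at hc
      obtain ⟨i, hi⟩ := hc
      unfold Hfun
      refine Finset.prod_eq_zero (Finset.mem_univ i) ?_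
      refine prod_desc_zero _ _ (ha i) ?_
      rw [hneg j i]; omega
    have hTnn : ∀ j : Fin mI, 0 ≤ Hfun d m h (dv - av j) a := by
      intro j
      by_cases hc : ∀ i, h i (av j) + h i (-dv) ≤ h i a
      · exact (hTpos j hc).le
      · exact (hTzero j hc).ge
    -- condition for a + dv ∈ E
    have hcond : (a + dv ∈ E) ↔ ∃ j : Fin mI, ∀ i, h i (av j) + h i (-dv) ≤ h i a := by
      rw [hmemE]
      refine exists_congr fun j => forall_congr' fun i => ?_
      have h1 : h i (a + dv) = h i a - h i (-dv) := by
        rw [map_add]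
        have : h i (-dv) = - h i dv := map_neg _ _
        omega
      omega
    constructor
    · intro hsum hmem
      obtain ⟨j, hj⟩ := hcond.mp hmem
      have hz : ∀ j' ∈ Finset.univ, Hfun d m h (dv - av j') a = 0 :=
        (Finset.sum_eq_zero_iff_of_nonneg fun j' _ => hTnn j').mp hsum
      exact absurd (hz j (Finset.mem_univ j)) (hTpos j hj).ne'
    · intro hmem
      refine Finset.sum_eq_zero fun j _ => hTzero j fun hc => hmem (hcond.mpr ⟨j, hc⟩)
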